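/- arXiv:1612.03643 — 7 statements merged into one kernel-verified Lean document; each statement's English description precedes it below -/
import Mathlib

section
/- Let 𝛁 be a torsion-free flat connection on the tangent bundle of a manifold N and let e be a vector field such that the pair (𝛁, e) is regular, with Q(x) = 𝛁_x e. Then the multiplication defined by x⋆y = −Q^{-1}(𝛁_x𝛁_y e) + 𝛁_x y is commutative: x⋆y = y⋆x for all vector fields x, y. -/
universe u v

/-- Abstract model of the holomorphic vector fields on a complex manifold:
`A` is the commutative `ℂ`-algebra of holomorphic functions and `X` is the
`A`-module of vector fields, equipped with a Lie bracket and with an action of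
vector fields on functions by derivations. -/
structure VectorFields (A : Type u) (X : Type v) [CommRing A] [Algebra ℂ A]
    [AddCommGroup X] [Module A X] where
  bracket : X → X → X
  act : X → A → A
  bracket_add_left : ∀ x y z : X, bracket (x + y) z = bracket x z + bracket y z
  bracket_antisymm : ∀ x y : X, bracket x y = - bracket y x
  jacobi : ∀ x y z : X,
    bracket x (bracket y z) + bracket y (bracket z x) + bracket z (bracket x y) = 0
  act_add_left : ∀ (x y : X) (f : A), act (x + y) f = act x f + act y f
  act_smul_left : ∀ (f : A) (x : X) (g : A), act (f • x) g = f * act x g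
  act_add_right : ∀ (x : X) (f g : A), act x (f + g) = act x f + act x g
  act_mul_right : ∀ (x : X) (f g : A), act x (f * g) = act x f * g + f * act x g
  act_algebraMap : ∀ (x : X) (c : ℂ), act x (algebraMap ℂ A c) = 0
  bracket_smul_right : ∀ (x : X) (f : A) (y : X),
    bracket x (f • y) = act x f • y + f • bracket x y
  act_bracket : ∀ (x y : X) (f : A),
    act (bracket x y) f = act x (act y f) - act y (act x f)

variable {A : Type u} {X : Type v} [CommRing A] [Algebra ℂ A]
  [AddCommGroup X] [Module A X]

/-- A torsion-free flat connection on the tangent bundle: `ℂ`-bilinear,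
`O`-linear in the first argument, Leibniz in the second, with vanishing
torsion and vanishing curvature. -/
structure IsTFFlatConnection (V : VectorFields A X) (conn : X → X → X) : Prop where
  add_left : ∀ x y z : X, conn (x + y) z = conn x z + conn y z
  smul_left : ∀ (f : A) (x y : X), conn (f • x) y = f • conn x y
  add_right : ∀ x y z : X, conn x (y + z) = conn x y + conn x z
  leibniz : ∀ (x : X) (f : A) (y : X), conn x (f • y) = V.act x f • y + f • conn x y
  torsion_free : ∀ x y : X, conn x y - conn y x = V.bracket x y
  flat : ∀ x y z : X, conn x (conn y z) - conn y (conn x z) = conn (V.bracket x y) z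

/-- An `O`-bilinear, commutative, associative multiplication on vector fields
with unit `e`. -/
structure IsUnitalMul (mul : X → X → X) (e : X) : Prop where
  add_left : ∀ x y z : X, mul (x + y) z = mul x z + mul y z
  smul_left : ∀ (f : A) (x y : X), mul (f • x) y = f • mul x y
  comm : ∀ x y : X, mul x y = mul y x
  assoc : ∀ x y z : X, mul (mul x y) z = mul x (mul y z)
  unit : ∀ x : X, mul e x = x

/-- A Saito structure (without metric) on a manifold, with connection `conn`,
multiplication `mul` with unit `e`, and Euler vector field `E`. -/
structure IsSaitoStructure (V : VectorFields A X) (conn mul : X → X → X) (e E : X) :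
    Prop where
  conn_flat : IsTFFlatConnection V conn
  mul_unital : IsUnitalMul (A := A) mul e
  SS1 : ∀ x y z : X,
    conn x (mul y z) - mul y (conn x z) - conn y (mul x z) + mul x (conn y z)
      = mul (V.bracket x y) z
  SS2 : ∀ x y : X,
    V.bracket E (mul x y) - mul (V.bracket E x) y - mul x (V.bracket E y) = mul x y
  SS3 : ∀ x : X, conn x e = 0
  SS4 : ∀ x y : X, conn x (conn y E) - conn (conn x y) E = 0

/-- An almost Saito structure with parameter `r`, with connection `conn`,
multiplication `mul` with unit `E`, and nonzero vector field `e`. -/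
structure IsAlmostSaitoStructure (V : VectorFields A X) (conn mul : X → X → X)
    (e E : X) (r : ℂ) : Prop where
  conn_flat : IsTFFlatConnection V conn
  mul_unital : IsUnitalMul (A := A) mul E
  e_ne_zero : e ≠ 0
  ASS1 : ∀ x y z : X,
    conn x (mul y z) - mul y (conn x z) - conn y (mul x z) + mul x (conn y z)
      = mul (V.bracket x y) z
  ASS2 : ∀ x y : X,
    V.bracket e (mul x y) - mul (V.bracket e x) y - mul x (V.bracket e y)
      + mul e (mul x y) = 0
  ASS3 : ∀ x : X, conn x E = algebraMap ℂ A r • x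
  ASS4 : ∀ x y : X,
    conn x (conn y e) - conn (conn x y) e + conn (mul x y) e = 0

/-- Proposition 2.7 (1) of the paper: for a regular pair `(∇, e)`, the
multiplication `x ⋆ y = -Q⁻¹(∇ₓ∇_y e) + ∇ₓ y` (with `Q v = ∇_v e`) is
commutative. -/
theorem regular_pair_mul_comm
    (V : VectorFields A X) (conn : X → X → X)
    (hconn : IsTFFlatConnection V conn) (e : X)
    (hreg : Function.Bijective fun v : X => conn v e) :
    ∀ x y : X,
      - Function.invFun (fun v : X => conn v e) (conn x (conn y e)) + conn x y
        = - Function.invFun (fun v : X => conn v e) (conn y (conn x e)) + conn y x := by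
  intro x y
  set Q : X → X := fun v : X => conn v e with hQ
  have hadd : ∀ u v : X, Q (u + v) = Q u + Q v := fun u v => hconn.add_left u v e
  have hsub : ∀ u v : X, Q (u - v) = Q u - Q v := by
    intro u v
    have h := hadd (u - v) v
    rw [sub_add_cancel] at h
    rw [eq_sub_of_add_eq h.symm]
  have hright : ∀ z : X, Q (Function.invFun Q z) = z := fun z =>
    Function.rightInverse_invFun hreg.surjective z
  have key : Function.invFun Q (conn x (conn y e))
      = Function.invFun Q (conn y (conn x e)) + (conn x y - conn y x) := by
    apply hreg.injective
    show Q _ = Q _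
    rw [hadd, hright, hright, hsub]
    have hflat := hconn.flat x y e
    have htf := hconn.torsion_free x y
    have h1 : Q (conn x y) - Q (conn y x) = conn (V.bracket x y) e := by
      rw [← hsub, htf]
    rw [h1, ← hflat]
    abel
  rw [key]
  abel
end

section
/- Let 𝛁 be a torsion-free flat connection on the tangent bundle of a manifold N and let e be a vector field such that the pair (𝛁, e) is regular, with Q(x) = 𝛁_x e. Define the multiplication x⋆y = −Q^{-1}(𝛁_x𝛁_y e) + 𝛁_x y. Then ⋆ is associative if and only if the condition (ASS1) 𝛁_x(y⋆z) − y⋆𝛁_x z − 𝛁_y(x⋆z) + x⋆𝛁_y z = [x,y]⋆z holds for all vector fields x, y, z. -/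
universe u v

variable {A : Type u} {X : Type v} [CommRing A] [Algebra ℂ A]
  [AddCommGroup X] [Module A X]

/-- Proposition 2.7 (2) of the paper: for a regular pair `(∇, e)`, the
multiplication `x ⋆ y = -Q⁻¹(∇ₓ∇_y e) + ∇ₓ y` (with `Q v = ∇_v e`) is
associative if and only if (ASS1) holds. -/
theorem regular_pair_mul_assoc_iff_ASS1
    (V : VectorFields A X) (conn : X → X → X)
    (hconn : IsTFFlatConnection V conn) (e : X)
    (hreg : Function.Bijective fun v : X => conn v e) :
    ∀ mul : X → X → X,
      (∀ x y : X, mul x y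
        = - Function.invFun (fun v : X => conn v e) (conn x (conn y e)) + conn x y) →
      ((∀ x y z : X, mul (mul x y) z = mul x (mul y z)) ↔
        (∀ x y z : X,
          conn x (mul y z) - mul y (conn x z) - conn y (mul x z) + mul x (conn y z)
            = mul (V.bracket x y) z)) := by
  intro mul hmul
  -- basic linearity facts
  have hneg_l : ∀ a b : X, conn (-a) b = -conn a b := by
    intro a b
    have h := hconn.smul_left (-1 : A) a b
    simpa [neg_one_smul] using h
  have hQadd : ∀ a b : X, conn (a + b) e = conn a e + conn b e :=
    fun a b => hconn.add_left a b e
  have hQsub : ∀ a b : X, conn (a - b) e = conn a e - conn b e := by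
    intro a b
    rw [sub_eq_add_neg, hQadd, hneg_l, ← sub_eq_add_neg]
  have hneg_r : ∀ (a : X) (w : X), conn a (-w) = -conn a w := by
    intro a w
    have hact : V.act a (-1 : A) = 0 := by
      have h := V.act_algebraMap a (-1)
      simpa using h
    have h := hconn.leibniz a (-1 : A) w
    simpa [hact, neg_one_smul] using h
  have hsub_r : ∀ (a u v : X), conn a (u - v) = conn a u - conn a v := by
    intro a u v
    rw [sub_eq_add_neg, hconn.add_right, hneg_r, ← sub_eq_add_neg]
  have hQ : ∀ w : X, conn (Function.invFun (fun v : X => conn v e) w) e = w :=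
    fun w => Function.invFun_eq (hreg.2 w)
  have hQmul : ∀ a b : X,
      conn (mul a b) e = conn (conn a b) e - conn a (conn b e) := by
    intro a b
    rw [hmul a b, hconn.add_left, hneg_l, hQ]
    abel
  have key : ∀ a b c d : X, b - d = a - c → a - b = c - d := by
    intro a b c d h
    have h9 : a - b - (c - d) = -(b - d - (a - c)) := by abel
    rw [h, sub_self, neg_zero] at h9
    exact sub_eq_zero.mp h9
  have hcomm : ∀ a b : X, mul a b = mul b a := by
    intro a b
    apply hreg.1
    show conn (mul a b) e = conn (mul b a) e
    rw [hQmul, hQmul]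
    have hf := hconn.flat a b e
    have ht : conn (conn a b) e - conn (conn b a) e = conn (V.bracket a b) e := by
      rw [← hconn.torsion_free a b, hQsub]
    rw [← ht] at hf
    exact key _ _ _ _ hf
  have hMAIN : ∀ x y z : X,
      conn x (mul y z) - mul y (conn x z) - conn y (mul x z) + mul x (conn y z)
          - mul (V.bracket x y) z
        = mul x (mul y z) - mul y (mul x z) := by
    intro x y z
    apply hreg.1
    have h1 := hconn.flat x y (conn z e)
    have h2 : conn (conn x (conn y z)) e - conn (conn y (conn x z)) e
        = conn (conn (V.bracket x y) z) e := by
      rw [← hconn.flat x y z, hQsub]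
    simp only [hQsub, hQadd, hQmul, hsub_r]
    rw [← h2, ← h1]
    abel
  constructor
  · intro hassoc x y z
    have hm := hMAIN x y z
    have h0 : mul x (mul y z) = mul y (mul x z) := by
      rw [← hassoc, ← hassoc, hcomm x y]
    rw [h0, sub_self] at hm
    exact sub_eq_zero.mp hm
  · intro hA
    have hS : ∀ x y z : X, mul x (mul y z) = mul y (mul x z) := by
      intro x y z
      have hm := hMAIN x y z
      rw [hA x y z, sub_self] at hm
      exact (sub_eq_zero.mp hm.symm)
    intro x y z
    calc mul (mul x y) z = mul z (mul x y) := hcomm _ _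
      _ = mul x (mul z y) := hS z x y
      _ = mul x (mul y z) := by rw [hcomm z y]
end

section
/- Let (𝛁, ⋆, e) be an almost Saito structure on a manifold N with parameter r ∈ ℂ and unit E. Fix λ ∈ ℂ, let I_λ(x) = (E − λe)⋆x, and assume the endomorphism I_λ of the tangent bundle is invertible (working on the open subset N^λ where it has full rank, assumed nonempty). For ν ∈ ℂ define x ⋆_λ y = I_λ^{-1}(x⋆y) and 𝛁^{[λ,ν]}_x y = 𝛁_x y + ν x⋆_λ y + λ 𝛁_{x⋆_λ y} e. Then (𝛁^{[λ,ν]}, ⋆_λ, e) is an almost Saito structure on N^λ with parameter r + ν and unit E − λe. -/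
universe u v

variable {A : Type u} {X : Type v} [CommRing A] [Algebra ℂ A]
  [AddCommGroup X] [Module A X]

namespace Prop29

variable {A : Type u} {X : Type v} [CommRing A] [Algebra ℂ A]
  [AddCommGroup X] [Module A X]

theorem addHom_sub {F : X → X} (hF : ∀ a b : X, F (a + b) = F a + F b) (a b : X) :
    F (a - b) = F a - F b := by
  have h1 : F a = F (a - b) + F b := by rw [← hF]; congr 1; abel
  exact eq_sub_of_add_eq h1.symm

theorem addHom_zero {F : X → X} (hF : ∀ a b : X, F (a + b) = F a + F b) : F 0 = 0 := by
  have h1 : F 0 = F 0 + F 0 := by rw [← hF]; congr 1; abel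
  exact (add_eq_left.mp h1.symm)

structure Ctx (A : Type u) (X : Type v) [CommRing A] [Algebra ℂ A]
    [AddCommGroup X] [Module A X] where
  V : VectorFields A X
  conn : X → X → X
  mul : X → X → X
  e : X
  E : X
  r : ℂ
  lam : ℂ
  h : IsAlmostSaitoStructure V conn mul e E r
  hreg : Function.Bijective fun v : X => mul (E - algebraMap ℂ A lam • e) v

namespace Ctx

variable (c : Ctx A X)

abbrev u : X := c.E - algebraMap ℂ A c.lam • c.e

noncomputable abbrev J : X → X := Function.invFun fun v : X => c.mul c.u v

noncomputable abbrev m (x y : X) : X := c.J (c.mul x y)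

/-! ### multiplication basics -/

theorem mcomm (x y : X) : c.mul x y = c.mul y x := c.h.mul_unital.comm x y
theorem massoc (x y z : X) : c.mul (c.mul x y) z = c.mul x (c.mul y z) :=
  c.h.mul_unital.assoc x y z
theorem maddl (x y z : X) : c.mul (x + y) z = c.mul x z + c.mul y z :=
  c.h.mul_unital.add_left x y z
theorem msmull (f : A) (x y : X) : c.mul (f • x) y = f • c.mul x y :=
  c.h.mul_unital.smul_left f x y
theorem mE (x : X) : c.mul c.E x = x := c.h.mul_unital.unit x
theorem maddr (x y z : X) : c.mul x (y + z) = c.mul x y + c.mul x z := by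
  rw [c.mcomm x (y + z), c.maddl, c.mcomm y x, c.mcomm z x]
theorem msmulr (f : A) (x y : X) : c.mul x (f • y) = f • c.mul x y := by
  rw [c.mcomm x (f • y), c.msmull, c.mcomm y x]
theorem msubl (x y z : X) : c.mul (x - y) z = c.mul x z - c.mul y z :=
  addHom_sub (F := fun t => c.mul t z) (fun a b => c.maddl a b z) x y
theorem msubr (x y z : X) : c.mul x (y - z) = c.mul x y - c.mul x z :=
  addHom_sub (F := fun t => c.mul x t) (fun a b => c.maddr x a b) y z
theorem mzeror (x : X) : c.mul x 0 = 0 :=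
  addHom_zero (F := fun t => c.mul x t) (fun a b => c.maddr x a b)

/-! ### connection basics -/

theorem caddl (x y z : X) : c.conn (x + y) z = c.conn x z + c.conn y z :=
  c.h.conn_flat.add_left x y z
theorem csmull (f : A) (x y : X) : c.conn (f • x) y = f • c.conn x y :=
  c.h.conn_flat.smul_left f x y
theorem caddr (x y z : X) : c.conn x (y + z) = c.conn x y + c.conn x z :=
  c.h.conn_flat.add_right x y z
theorem clb (x : X) (f : A) (y : X) : c.conn x (f • y) = c.V.act x f • y + f • c.conn x y :=
  c.h.conn_flat.leibniz x f y
theorem ctf (x y : X) : c.conn x y - c.conn y x = c.V.bracket x y :=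
  c.h.conn_flat.torsion_free x y
theorem cflat (x y z : X) :
    c.conn x (c.conn y z) - c.conn y (c.conn x z) = c.conn (c.V.bracket x y) z :=
  c.h.conn_flat.flat x y z
theorem csubl (x y z : X) : c.conn (x - y) z = c.conn x z - c.conn y z :=
  addHom_sub (F := fun t => c.conn t z) (fun a b => c.caddl a b z) x y
theorem csubr (x y z : X) : c.conn x (y - z) = c.conn x y - c.conn x z :=
  addHom_sub (F := fun t => c.conn x t) (fun a b => c.caddr x a b) y z
theorem ccs (t : ℂ) (x y : X) :
    c.conn x (algebraMap ℂ A t • y) = algebraMap ℂ A t • c.conn x y := by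
  rw [c.clb, c.V.act_algebraMap, zero_smul, zero_add]

/-! ### the inverse J and the new product m -/

theorem JI (x : X) : c.J (c.mul c.u x) = x :=
  Function.leftInverse_invFun c.hreg.injective x

theorem IJ (x : X) : c.mul c.u (c.J x) = x :=
  Function.rightInverse_invFun c.hreg.surjective x

theorem Jadd (a b : X) : c.J (a + b) = c.J a + c.J b := by
  apply c.hreg.injective
  show c.mul c.u (c.J (a + b)) = c.mul c.u (c.J a + c.J b)
  rw [c.IJ, c.maddr, c.IJ, c.IJ]

theorem Jsub (a b : X) : c.J (a - b) = c.J a - c.J b :=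
  addHom_sub (F := c.J) c.Jadd a b

theorem Jsmul (f : A) (a : X) : c.J (f • a) = f • c.J a := by
  apply c.hreg.injective
  show c.mul c.u (c.J (f • a)) = c.mul c.u (f • c.J a)
  rw [c.IJ, c.msmulr, c.IJ]

theorem Jmul (a b : X) : c.J (c.mul a b) = c.mul (c.J a) b := by
  apply c.hreg.injective
  show c.mul c.u (c.J (c.mul a b)) = c.mul c.u (c.mul (c.J a) b)
  rw [c.IJ, ← c.massoc, c.IJ]

theorem mulJ (x a : X) : c.mul x (c.J a) = c.J (c.mul x a) := by
  rw [c.mcomm x (c.J a), ← c.Jmul, c.mcomm a x]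

theorem muJ (x y : X) : c.mul c.u (c.m x y) = c.mul x y := c.IJ _

theorem m_u (x : X) : c.m c.u x = x := c.JI x

theorem mcommm (x y : X) : c.m x y = c.m y x := congrArg c.J (c.mcomm x y)

theorem m_u' (x : X) : c.m x c.u = x := by rw [c.mcommm]; exact c.JI x

theorem m_addl (x y z : X) : c.m (x + y) z = c.m x z + c.m y z := by
  show c.J (c.mul (x + y) z) = _
  rw [c.maddl, c.Jadd]

theorem m_addr (x y z : X) : c.m x (y + z) = c.m x y + c.m x z := by
  show c.J (c.mul x (y + z)) = _
  rw [c.maddr, c.Jadd]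

theorem m_smull (f : A) (x y : X) : c.m (f • x) y = f • c.m x y := by
  show c.J (c.mul (f • x) y) = _
  rw [c.msmull, c.Jsmul]

theorem m_smulr (f : A) (x y : X) : c.m x (f • y) = f • c.m x y := by
  show c.J (c.mul x (f • y)) = _
  rw [c.msmulr, c.Jsmul]

theorem m_subl (x y z : X) : c.m (x - y) z = c.m x z - c.m y z :=
  addHom_sub (F := fun t => c.m t z) (fun a b => c.m_addl a b z) x y

theorem m_subr (x y z : X) : c.m x (y - z) = c.m x y - c.m x z :=
  addHom_sub (F := fun t => c.m x t) (fun a b => c.m_addr x a b) y z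

theorem massoc' (x y z : X) : c.m (c.m x y) z = c.m x (c.m y z) := by
  show c.J (c.mul (c.m x y) z) = c.J (c.mul x (c.m y z))
  rw [c.mulJ, show c.mul (c.m x y) z = c.J (c.mul (c.mul x y) z) from (c.Jmul _ _).symm,
    ← c.massoc]

theorem sym3 (x y z : X) : c.mul x (c.m y z) = c.mul y (c.m x z) := by
  rw [c.mulJ, c.mulJ]
  exact congrArg c.J (by rw [← c.massoc, c.mcomm x y, c.massoc])

theorem msym3 (x y z : X) : c.m x (c.m y z) = c.m y (c.m x z) :=
  congrArg c.J (c.sym3 x y z)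

theorem eK (x y : X) : c.mul x (c.m y c.e) = c.mul c.e (c.m x y) := by
  rw [c.mulJ, c.mulJ]
  exact congrArg c.J (by rw [← c.massoc, c.mcomm (c.mul x y) c.e])

theorem uexp (w : X) : c.mul c.u w = w - algebraMap ℂ A c.lam • c.mul c.e w := by
  show c.mul (c.E - algebraMap ℂ A c.lam • c.e) w = _
  rw [c.msubl, c.mE, c.msmull]

theorem uxK' (x y : X) :
    c.mul x (c.m y c.e) - algebraMap ℂ A c.lam • c.mul c.e (c.mul x (c.m y c.e))
      = c.mul c.e (c.mul x y) := by
  rw [← c.uexp, ← c.massoc, c.mcomm c.u x, c.massoc, c.muJ, ← c.massoc,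
    c.mcomm (c.mul x y) c.e]

theorem Jexp (v : X) : c.J v = v + algebraMap ℂ A c.lam • c.m v c.e := by
  apply c.hreg.injective
  show c.mul c.u (c.J v) = c.mul c.u (v + algebraMap ℂ A c.lam • c.m v c.e)
  rw [c.IJ, c.maddr, c.msmulr, c.muJ, c.uexp v, c.mcomm v c.e]
  abel

/-! ### structure equations -/

theorem cu (x : X) :
    c.conn x c.u = algebraMap ℂ A c.r • x - algebraMap ℂ A c.lam • c.conn x c.e := by
  show c.conn x (c.E - algebraMap ℂ A c.lam • c.e) = _
  rw [c.csubr, c.h.ASS3, c.ccs]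

theorem A4' (x y : X) :
    c.conn x (c.conn y c.e) = c.conn (c.conn x y) c.e - c.conn (c.mul x y) c.e := by
  have t := c.h.ASS4 x y
  linear_combination (norm := module) t

theorem T1sym (x y z : X) :
    c.conn x (c.mul y z) - c.mul (c.conn x y) z - c.mul y (c.conn x z)
      = c.conn y (c.mul x z) - c.mul (c.conn y x) z - c.mul x (c.conn y z) := by
  have t := c.h.ASS1 x y z
  rw [← c.ctf x y, c.msubl] at t
  linear_combination (norm := module) t

theorem T2 (x y : X) :
    c.conn c.e (c.mul x y) - c.mul (c.conn c.e x) y - c.mul x (c.conn c.e y)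
      = c.conn (c.mul x y) c.e - c.mul (c.conn x c.e) y - c.mul x (c.conn y c.e)
        - c.mul c.e (c.mul x y) := by
  have t := c.h.ASS2 x y
  rw [← c.ctf c.e (c.mul x y), ← c.ctf c.e x, ← c.ctf c.e y, c.msubl, c.msubr] at t
  linear_combination (norm := module) t

theorem Te (x w : X) :
    c.conn x (c.mul c.e w) = c.mul c.e (c.conn x w) + c.conn (c.mul x w) c.e
      - c.mul x (c.conn w c.e) - c.mul c.e (c.mul x w) := by
  have t1 := c.T1sym x c.e w
  have t2 := c.T2 x w
  linear_combination (norm := module) t1 + t2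

theorem cDM (x w : X) :
    c.mul c.u (c.conn x w) = c.conn x (c.mul c.u w)
      + algebraMap ℂ A c.lam • (c.conn (c.mul x w) c.e - c.mul x (c.conn w c.e)
        - c.mul c.e (c.mul x w)) := by
  rw [c.uexp w, c.csubr, c.ccs, c.Te, c.uexp (c.conn x w)]
  module

theorem DMm (x y z : X) :
    c.mul c.u (c.conn x (c.m y z)) = c.conn x (c.mul y z)
      + algebraMap ℂ A c.lam • (c.conn (c.mul x (c.m y z)) c.e
        - c.mul x (c.conn (c.m y z) c.e) - c.mul c.e (c.mul x (c.m y z))) := by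
  have t := c.cDM x (c.m y z)
  rwa [c.muJ] at t

theorem R2 (x y : X) :
    c.conn (c.mul x y) c.e = c.conn (c.m x y) c.e
      - algebraMap ℂ A c.lam • c.conn (c.mul c.e (c.m x y)) c.e := by
  conv_lhs => rw [← c.muJ x y, c.uexp]
  rw [c.csubl, c.csmull]

theorem R2e (x y : X) :
    c.mul c.e (c.mul x y) = c.mul c.e (c.m x y)
      - algebraMap ℂ A c.lam • c.mul c.e (c.mul c.e (c.m x y)) := by
  conv_lhs => rw [← c.muJ x y, c.uexp]
  rw [c.msubr, c.msmulr]

theorem cKm (x y : X) :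
    c.conn x (c.m y c.e) = c.m (c.conn x y) c.e + c.J (c.conn (c.mul x y) c.e)
      - c.m x (c.conn y c.e) - c.m x (c.m y c.e)
      + algebraMap ℂ A c.lam • c.J (c.conn (c.mul x (c.m y c.e)) c.e)
      - algebraMap ℂ A c.lam • c.m x (c.conn (c.m y c.e) c.e) := by
  apply c.hreg.injective
  show c.mul c.u (c.conn x (c.m y c.e)) = c.mul c.u _
  rw [c.DMm x y c.e]
  simp only [c.maddr, c.msubr, c.msmulr]
  simp only [c.muJ, c.IJ]
  rw [c.mcomm y c.e, c.Te x y]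
  linear_combination (norm := module) c.uxK' x y + c.mcomm c.e (c.conn x y)

theorem key (x y z : X) :
    c.conn x (c.m y z) - c.conn y (c.m x z) - c.m (c.conn x y) z + c.m (c.conn y x) z
      - c.m y (c.conn x z) + c.m x (c.conn y z)
    = algebraMap ℂ A c.lam • c.m y (c.conn (c.m x z) c.e)
      - algebraMap ℂ A c.lam • c.m x (c.conn (c.m y z) c.e) := by
  apply c.hreg.injective
  show c.mul c.u _ = c.mul c.u _
  simp only [c.maddr, c.msubr, c.msmulr]
  rw [c.DMm x y z, c.DMm y x z]
  simp only [c.muJ]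
  rw [c.sym3 x y z]
  linear_combination (norm := module) c.T1sym x y z

end Ctx

end Prop29

namespace Prop29
namespace Ctx

variable {A : Type u} {X : Type v} [CommRing A] [Algebra ℂ A]
  [AddCommGroup X] [Module A X] (c : Ctx A X)

theorem main (nu : ℂ) :
    IsAlmostSaitoStructure c.V
      (fun x y => c.conn x y + algebraMap ℂ A nu • c.m x y
        + algebraMap ℂ A c.lam • c.conn (c.m x y) c.e)
      c.m c.e c.u (c.r + nu) := by
  constructor
  case e_ne_zero => exact c.h.e_ne_zero
  case mul_unital =>
    constructor
    · exact c.m_addl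
    · exact c.m_smull
    · exact c.mcommm
    · exact c.massoc'
    · exact c.m_u
  case conn_flat =>
    constructor
    · intro x y z
      rw [c.caddl, c.m_addl, c.caddl]
      module
    · intro f x y
      rw [c.csmull, c.m_smull, c.csmull]
      module
    · intro x y z
      rw [c.caddr, c.m_addr, c.caddl]
      module
    · intro x f y
      rw [c.clb, c.m_smulr, c.csmull]
      module
    · intro x y
      rw [← c.ctf x y, c.mcommm y x]
      module
    · -- flatness
      intro x y z
      have hflat := c.cflat x y z
      rw [← c.ctf x y, c.csubl] at hflat
      have hkey := c.key x y z
      have hkeyP : c.conn (c.conn x (c.m y z)) c.e - c.conn (c.conn y (c.m x z)) c.e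
            - c.conn (c.m (c.conn x y) z) c.e + c.conn (c.m (c.conn y x) z) c.e
            - c.conn (c.m y (c.conn x z)) c.e + c.conn (c.m x (c.conn y z)) c.e
          = algebraMap ℂ A c.lam • c.conn (c.m y (c.conn (c.m x z) c.e)) c.e
            - algebraMap ℂ A c.lam • c.conn (c.m x (c.conn (c.m y z) c.e)) c.e := by
        have t := congrArg (fun t => c.conn t c.e) hkey
        simpa only [c.caddl, c.csubl, c.csmull] using t
      have hms := c.msym3 x y z
      have hmsP : c.conn (c.m x (c.m y z)) c.e = c.conn (c.m y (c.m x z)) c.e :=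
        congrArg (fun t => c.conn t c.e) hms
      have hs3P : c.conn (c.mul x (c.m y z)) c.e = c.conn (c.mul y (c.m x z)) c.e :=
        congrArg (fun t => c.conn t c.e) (c.sym3 x y z)
      have hA4x := c.A4' x (c.m y z)
      have hA4y := c.A4' y (c.m x z)
      rw [← c.ctf x y]
      simp only [c.caddr, c.ccs, c.caddl, c.csmull, c.csubl, c.csubr,
        c.m_addr, c.m_smulr, c.m_addl, c.m_smull, c.m_subl, c.m_subr]
      linear_combination (norm := module) hflat
        + algebraMap ℂ A nu • hkey + algebraMap ℂ A c.lam • hkeyP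
        + (algebraMap ℂ A nu * algebraMap ℂ A nu) • hms
        + (algebraMap ℂ A nu * algebraMap ℂ A c.lam) • hmsP
        - algebraMap ℂ A c.lam • hs3P
        + algebraMap ℂ A c.lam • hA4x - algebraMap ℂ A c.lam • hA4y
  case ASS1 =>
    intro x y z
    have hkey := c.key x y z
    have hms := c.msym3 x y z
    have hmsP : c.conn (c.m x (c.m y z)) c.e = c.conn (c.m y (c.m x z)) c.e :=
      congrArg (fun t => c.conn t c.e) hms
    rw [← c.ctf x y]
    simp only [c.caddr, c.ccs, c.caddl, c.csmull, c.csubl, c.csubr,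
      c.m_addr, c.m_smulr, c.m_addl, c.m_smull, c.m_subl, c.m_subr]
    linear_combination (norm := module) hkey
      + ((2 : A) * algebraMap ℂ A nu) • hms + algebraMap ℂ A c.lam • hmsP
  case ASS2 =>
    intro x y
    rw [← c.ctf c.e (c.m x y), ← c.ctf c.e x, ← c.ctf c.e y]
    simp only [c.m_subl, c.m_subr]
    apply c.hreg.injective
    show c.mul c.u _ = c.mul c.u 0
    rw [c.mzeror]
    simp only [c.maddr, c.msubr, c.msmulr]
    rw [c.DMm c.e x y]
    simp only [c.muJ]
    rw [c.uexp (c.conn (c.m x y) c.e)]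
    have hT2 := c.T2 x y
    have hR2 := c.R2 x y
    have hR2e := c.R2e x y
    linear_combination (norm := module) hT2 + hR2 - hR2e
  case ASS3 =>
    intro x
    rw [c.m_u' x, c.cu x, map_add, add_smul]
    module
  case ASS4 =>
    intro x y
    have hA4b := c.A4' x (c.m y c.e)
    simp only [c.caddr, c.ccs, c.caddl, c.csmull, c.m_addr, c.m_smulr, c.m_addl, c.m_smull]
    rw [c.A4' x y, hA4b, c.cKm x y]
    simp only [c.caddl, c.csubl, c.csmull]
    rw [← c.massoc' x y c.e, c.eK x y, c.R2 x y]
    simp only [c.Jsub, c.Jsmul]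
    rw [c.Jexp (c.conn (c.m x y) c.e), c.Jexp (c.conn (c.mul c.e (c.m x y)) c.e)]
    simp only [c.caddl, c.csubl, c.csmull, c.caddr, c.csubr]
    module

end Ctx
end Prop29

/-- Proposition 2.9 of the paper: the two-parameter family of almost Saito
structures attached to a given almost Saito structure. Here
`I_λ x = (E - λe) ⋆ x` is assumed invertible (we work on the subset `N^λ`
where it has full rank), `x ⋆_λ y = I_λ⁻¹ (x ⋆ y)` and
`∇^{[λ,ν]}_x y = ∇ₓ y + ν x ⋆_λ y + λ ∇_{x ⋆_λ y} e`. -/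
theorem almost_saito_two_parameter_family
    (V : VectorFields A X) (conn mul : X → X → X) (e E : X) (r lam nu : ℂ)
    (h : IsAlmostSaitoStructure V conn mul e E r)
    (hreg : Function.Bijective fun v : X => mul (E - algebraMap ℂ A lam • e) v) :
    ∀ mulLam connLamNu : X → X → X,
      (∀ x y : X, mulLam x y
        = Function.invFun (fun v : X => mul (E - algebraMap ℂ A lam • e) v) (mul x y)) →
      (∀ x y : X, connLamNu x y
        = conn x y + algebraMap ℂ A nu • mulLam x y
          + algebraMap ℂ A lam • conn (mulLam x y) e) →
      IsAlmostSaitoStructure V connLamNu mulLam e (E - algebraMap ℂ A lam • e) (r + nu) := by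
  intro mulLam connLamNu hm hc
  let c : Prop29.Ctx A X := ⟨V, conn, mul, e, E, r, lam, h, hreg⟩
  have hm' : mulLam = c.m := by
    funext x y
    exact (hm x y).trans rfl
  subst hm'
  have hc' : connLamNu = fun x y => c.conn x y + algebraMap ℂ A nu • c.m x y
      + algebraMap ℂ A c.lam • c.conn (c.m x y) c.e := by
    funext x y
    exact hc x y
  subst hc'
  exact c.main nu
end

section
/- Let (𝛁, ⋆, e) be an almost Saito structure on a manifold N with parameter r ∈ ℂ and unit E. Let P(x) = e⋆x and assume P is invertible (working on the open subset N_0 where it has full rank, assumed nonempty). Define x∗y = x⋆P^{-1}(y) and ∇_x y = 𝛁_x y − 𝛁_{x∗y} e. Then: (1) ∗ is commutative and associative with unit e; (2) ∇ is torsion-free and flat; (3) (∇, ∗, E) is a Saito structure on N_0. -/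
universe u v

variable {A : Type u} {X : Type v} [CommRing A] [Algebra ℂ A]
  [AddCommGroup X] [Module A X]

/-- Proposition 3.5 (1)-(3) of the paper: from an almost Saito structure
`(𝛁, ⋆, e)` with parameter `r` and unit `E` one constructs a Saito structure
`(∇, ∗, E)` on the subset `N₀` where `P x = e ⋆ x` is invertible.  Here
`x ∗ y = x ⋆ P⁻¹(y)` and `∇ₓ y = 𝛁ₓ y - 𝛁_{x ∗ y} e`. -/
theorem almost_saito_to_saito
    (V : VectorFields A X) (conn mul : X → X → X) (e E : X) (r : ℂ)
    (h : IsAlmostSaitoStructure V conn mul e E r)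
    (hP : Function.Bijective fun v : X => mul e v) :
    ∀ mul2 conn2 : X → X → X,
      (∀ x y : X, mul2 x y = mul x (Function.invFun (fun v : X => mul e v) y)) →
      (∀ x y : X, conn2 x y = conn x y - conn (mul2 x y) e) →
      IsUnitalMul (A := A) mul2 e ∧
      IsTFFlatConnection V conn2 ∧
      IsSaitoStructure V conn2 mul2 e E := by

  obtain ⟨hc, hmu, -, A1, A2, A3, A4⟩ := h
  intro mul2 conn2 hm2 hc2
  set Q : X → X := Function.invFun (fun v : X => mul e v) with hQdef
  have hinj : ∀ a b : X, mul e a = mul e b → a = b := fun a b hab => hP.1 hab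
  have hPQ : ∀ v : X, mul e (Q v) = v := fun v => Function.rightInverse_invFun hP.2 v
  have hQP : ∀ v : X, Q (mul e v) = v := fun v => Function.leftInverse_invFun hP.1 v
  -- mul basics
  have mcomm := hmu.comm
  have massoc := hmu.assoc
  have munit := hmu.unit
  have madd_l := hmu.add_left
  have msmul_l := hmu.smul_left
  have madd_r : ∀ x y z : X, mul x (y + z) = mul x y + mul x z := by
    intro x y z; rw [mcomm, madd_l, mcomm y x, mcomm z x]
  have msmul_r : ∀ (f : A) (x y : X), mul x (f • y) = f • mul x y := by
    intro f x y; rw [mcomm, msmul_l, mcomm y x]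
  have mneg_r : ∀ x y : X, mul x (-y) = -(mul x y) := by
    intro x y; rw [← neg_one_smul A y, msmul_r, neg_one_smul]
  have msub_r : ∀ x y z : X, mul x (y - z) = mul x y - mul x z := by
    intro x y z; rw [sub_eq_add_neg, madd_r, mneg_r, ← sub_eq_add_neg]
  have mneg_l : ∀ x y : X, mul (-x) y = -(mul x y) := by
    intro x y; rw [mcomm, mneg_r, mcomm y x]
  have msub_l : ∀ x y z : X, mul (x - z) y = mul x y - mul z y := by
    intro x y z; rw [mcomm, msub_r, mcomm y x, mcomm y z]
  have hswap : ∀ a b c : X, mul a (mul b c) = mul b (mul a c) := by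
    intro a b c; rw [← massoc, mcomm a b, massoc]
  -- conn basics
  have cadd_l := hc.add_left
  have csmul_l := hc.smul_left
  have cadd_r := hc.add_right
  have cleib := hc.leibniz
  have ctf := hc.torsion_free
  have cflat := hc.flat
  have hact1 : ∀ x : X, V.act x ((-1 : A)) = 0 := by
    intro x
    have h1 : ((-1 : A)) = algebraMap ℂ A (-1) := by simp
    rw [h1, V.act_algebraMap]
  have cneg_r : ∀ x y : X, conn x (-y) = -(conn x y) := by
    intro x y
    rw [← neg_one_smul A y, cleib, hact1, zero_smul, zero_add, neg_one_smul]
  have csub_r : ∀ x y z : X, conn x (y - z) = conn x y - conn x z := by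
    intro x y z; rw [sub_eq_add_neg, cadd_r, cneg_r, ← sub_eq_add_neg]
  have cneg_l : ∀ x y : X, conn (-x) y = -(conn x y) := by
    intro x y; rw [← neg_one_smul A x, csmul_l, neg_one_smul]
  have csub_l : ∀ x y z : X, conn (x - z) y = conn x y - conn z y := by
    intro x y z; rw [sub_eq_add_neg, cadd_l, cneg_l, ← sub_eq_add_neg]
  -- Q basics
  have hQmul : ∀ x u : X, Q (mul x u) = mul x (Q u) := by
    intro x u; apply hinj
    rw [hPQ (mul x u), hswap e x (Q u), hPQ u]
  have hQadd : ∀ a b : X, Q (a + b) = Q a + Q b := by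
    intro a b; apply hinj; rw [hPQ, madd_r, hPQ, hPQ]
  have hQsmul : ∀ (f : A) (a : X), Q (f • a) = f • Q a := by
    intro f a; apply hinj; rw [hPQ, msmul_r, hPQ]
  have hQsub : ∀ a b : X, Q (a - b) = Q a - Q b := by
    intro a b; apply hinj; rw [hPQ, msub_r, hPQ, hPQ]
  -- mul2 basics
  have m2unit_l : ∀ x : X, mul2 e x = x := by intro x; rw [hm2, hPQ]
  have m2comm' : ∀ a b : X, mul a (Q b) = mul b (Q a) := by
    intro a b; apply hinj
    rw [hswap e a (Q b), hPQ b, hswap e b (Q a), hPQ a, mcomm]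
  have m2comm : ∀ x y : X, mul2 x y = mul2 y x := by
    intro x y; rw [hm2, hm2]; exact m2comm' x y
  have m2unit_r : ∀ x : X, mul2 x e = x := by intro x; rw [m2comm, m2unit_l]
  have m2add_l : ∀ x y z : X, mul2 (x + y) z = mul2 x z + mul2 y z := by
    intro x y z; rw [hm2, hm2, hm2, madd_l]
  have m2smul_l : ∀ (f : A) (x y : X), mul2 (f • x) y = f • mul2 x y := by
    intro f x y; rw [hm2, hm2, msmul_l]
  have m2assoc : ∀ x y z : X, mul2 (mul2 x y) z = mul2 x (mul2 y z) := by
    intro x y z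
    rw [hm2, hm2, hm2 y z, hm2 x (mul y (Q z))]
    rw [massoc, hQmul, mcomm (Q y) (Q z)]
    rw [m2comm' (Q z) y]
  have m2E : ∀ u : X, mul2 u E = Q u := by
    intro u; rw [hm2]; apply hinj
    rw [hswap e u (Q E), hPQ E, hPQ u, mcomm, munit]
  have m2add_r : ∀ x y z : X, mul2 x (y + z) = mul2 x y + mul2 x z := by
    intro x y z; rw [hm2, hm2, hm2, hQadd, madd_r]
  have m2smul_r : ∀ (f : A) (x y : X), mul2 x (f • y) = f • mul2 x y := by
    intro f x y; rw [hm2, hm2, hQsmul, msmul_r]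
  have m2sub_r : ∀ x y z : X, mul2 x (y - z) = mul2 x y - mul2 x z := by
    intro x y z; rw [hm2, hm2, hm2, hQsub, msub_r]
  -- the key differentiation formula for P = mul e
  have hdag : ∀ a w : X, conn a (mul e w)
      = mul e (conn a w) - mul e (mul a w) + conn (mul a w) e - mul a (conn w e) := by
    intro a w
    have h1 : conn a (mul e w)
        = mul (V.bracket a e) w + mul e (conn a w) + conn e (mul a w) - mul a (conn e w) := by
      rw [← A1 a e w]; abel
    have t1 : conn e (mul a w) = V.bracket e (mul a w) + conn (mul a w) e := by
      rw [← ctf e (mul a w)]; abel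
    have t2 : conn e w = V.bracket e w + conn w e := by
      rw [← ctf e w]; abel
    have t3 : mul (V.bracket a e) w = - mul (V.bracket e a) w := by
      rw [V.bracket_antisymm a e, mneg_l]
    have h2 : V.bracket e (mul a w)
        = mul (V.bracket e a) w + mul a (V.bracket e w) - mul e (mul a w) := by
      have h' : V.bracket e (mul a w)
          - (mul (V.bracket e a) w + mul a (V.bracket e w) - mul e (mul a w)) = 0 := by
        rw [← A2 a w]; abel
      exact sub_eq_zero.mp h'
    rw [h1, t1, t2, t3, h2, madd_r a (V.bracket e w) (conn w e)]
    abel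
  have hQconn : ∀ x y : X, Q (conn x y)
      = conn x (Q y) - mul x (Q y) + Q (conn (mul x (Q y)) e) - mul x (Q (conn (Q y) e)) := by
    intro x y
    have h1 : conn x y = conn x (mul e (Q y)) := by rw [hPQ]
    rw [h1, hdag x (Q y), hQsub, hQadd, hQsub, hQP, hQP, hQmul x (conn (Q y) e)]
  -- the key identity (dagger)
  have key : ∀ x y z : X,
      conn x (mul2 y z) - mul2 y (conn x z) - conn y (mul2 x z) + mul2 x (conn y z)
        + mul2 y (conn (mul2 x z) e) - mul2 x (conn (mul2 y z) e)
      = mul2 (V.bracket x y) z := by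
    intro x y z
    simp only [hm2]
    rw [hQconn x z, hQconn y z]
    simp only [msub_r, madd_r]
    rw [hswap y x (Q z), hswap y x (Q (conn (Q z) e)), ← A1 x y (Q z)]
    abel
  -- ASS4 rearranged
  have e1 : ∀ a b : X, conn a (conn b e) = conn (conn a b) e - conn (mul a b) e := by
    intro a b
    have h' : conn a (conn b e) - (conn (conn a b) e - conn (mul a b) e) = 0 := by
      rw [← A4 a b]; abel
    exact sub_eq_zero.mp h'
  -- conn2 basics
  have c2add_l : ∀ x y z : X, conn2 (x + y) z = conn2 x z + conn2 y z := by
    intro x y z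
    simp only [hc2, m2add_l, cadd_l]
    abel
  have c2smul_l : ∀ (f : A) (x y : X), conn2 (f • x) y = f • conn2 x y := by
    intro f x y
    simp only [hc2, m2smul_l, csmul_l, smul_sub]
  have c2add_r : ∀ x y z : X, conn2 x (y + z) = conn2 x y + conn2 x z := by
    intro x y z
    simp only [hc2, m2add_r, cadd_r, cadd_l]
    abel
  have c2leib : ∀ (x : X) (f : A) (y : X),
      conn2 x (f • y) = V.act x f • y + f • conn2 x y := by
    intro x f y
    simp only [hc2, m2smul_r, cleib, csmul_l, smul_sub]
    abel
  have c2tf : ∀ x y : X, conn2 x y - conn2 y x = V.bracket x y := by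
    intro x y
    simp only [hc2]
    rw [m2comm y x, ← ctf x y]
    abel
  have c2flat : ∀ x y z : X,
      conn2 x (conn2 y z) - conn2 y (conn2 x z) = conn2 (V.bracket x y) z := by
    intro x y z
    have hfl := cflat x y z
    have hk := congrArg (fun u : X => conn u e) (key x y z)
    simp only [csub_l, cadd_l] at hk
    simp only [hc2]
    simp only [csub_r, m2sub_r, csub_l]
    rw [e1 x (mul2 y z), e1 y (mul2 x z)]
    rw [show mul x (mul2 y z) = mul y (mul2 x z) from by
      rw [hm2 y z, hm2 x z, hswap]]
    rw [← hk, ← hfl]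
    abel
  -- SS fields
  have hSS1 : ∀ x y z : X,
      conn2 x (mul2 y z) - mul2 y (conn2 x z) - conn2 y (mul2 x z) + mul2 x (conn2 y z)
        = mul2 (V.bracket x y) z := by
    intro x y z
    simp only [hc2, m2sub_r]
    rw [show mul2 x (mul2 y z) = mul2 y (mul2 x z) from by
      rw [← m2assoc, m2comm x y, m2assoc], ← key x y z]
    abel
  have hSS2 : ∀ x y : X,
      V.bracket E (mul2 x y) - mul2 (V.bracket E x) y - mul2 x (V.bracket E y)
        = mul2 x y := by
    intro x y
    have hbrE : ∀ u : X, V.bracket E u = conn E u - algebraMap ℂ A r • u := by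
      intro u; rw [← ctf E u, A3]
    have f4 : conn E y = mul e (conn E (Q y)) - mul e (Q y) := by
      conv_lhs => rw [← hPQ y]
      rw [hdag E (Q y)]
      simp only [munit]
      abel
    have f5 : Q (V.bracket E y) = conn E (Q y) - Q y - algebraMap ℂ A r • Q y := by
      rw [hbrE y, hQsub, f4, hQsub, hQP, hQP, hQsmul]
    have f6 : conn E (mul x (Q y)) - mul x (conn E (Q y))
        = mul (conn E x) (Q y) - algebraMap ℂ A r • mul x (Q y) := by
      have h1 := A1 E x (Q y)
      simp only [munit] at h1
      rw [hbrE x, msub_l, msmul_l] at h1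
      rw [← h1]; abel
    have f6' : conn E (mul x (Q y))
        = mul x (conn E (Q y)) + (mul (conn E x) (Q y) - algebraMap ℂ A r • mul x (Q y)) := by
      rw [← f6]; abel
    simp only [hm2]
    rw [hbrE (mul x (Q y)), hbrE x, msub_l, msmul_l, f5, msub_r, msub_r, msmul_r, f6']
    abel
  have hSS3 : ∀ x : X, conn2 x e = 0 := by
    intro x; rw [hc2, m2unit_r, sub_self]
  have c2neg_r : ∀ x y : X, conn2 x (-y) = -(conn2 x y) := by
    intro x y
    rw [← neg_one_smul A y, c2leib, hact1, zero_smul, zero_add, neg_one_smul]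
  have c2sub_r : ∀ x y z : X, conn2 x (y - z) = conn2 x y - conn2 x z := by
    intro x y z; rw [sub_eq_add_neg, c2add_r, c2neg_r, ← sub_eq_add_neg]
  have c2alg : ∀ x y : X, conn2 x (algebraMap ℂ A r • y) = algebraMap ℂ A r • conn2 x y := by
    intro x y; rw [c2leib, V.act_algebraMap, zero_smul, zero_add]
  have hSS4 : ∀ x y : X, conn2 x (conn2 y E) - conn2 (conn2 x y) E = 0 := by
    intro x y
    have g1 : ∀ u : X, conn2 u E = algebraMap ℂ A r • u - conn (Q u) e := by
      intro u; rw [hc2, A3, m2E]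
    have hqc : Q (conn2 x y) = conn x (Q y) - mul x (Q y) - mul x (Q (conn (Q y) e)) := by
      rw [hc2, hm2, hQsub, hQconn x y]
      abel
    have L : conn2 x (conn (Q y) e) = conn (Q (conn2 x y)) e := by
      rw [hqc, hc2, hm2, e1 x (Q y), csub_l, csub_l]
    rw [g1 y, g1 (conn2 x y), c2sub_r, c2alg, L]
    abel
  exact ⟨⟨m2add_l, m2smul_l, m2comm, m2assoc, m2unit_l⟩,
    ⟨c2add_l, c2smul_l, c2add_r, c2leib, c2tf, c2flat⟩,
    ⟨⟨c2add_l, c2smul_l, c2add_r, c2leib, c2tf, c2flat⟩,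
     ⟨m2add_l, m2smul_l, m2comm, m2assoc, m2unit_l⟩,
     hSS1, hSS2, hSS3, hSS4⟩⟩
end

section
/- (i) Let (∇, ∗, E) be a Saito structure with unit e, and let (𝛁^{(0,r)}, ⋆_0, e) be its dual almost Saito structure with parameter r ∈ ℂ, defined on the subset where E∗ is invertible by x⋆_0 y = (E∗)^{-1}(x∗y) and 𝛁^{(0,r)}_x y = ∇_x y + r x⋆_0 y − ∇_{x⋆_0 y} E. Then the dual Saito structure of (𝛁^{(0,r)}, ⋆_0, e) — constructed via x∗'y = x⋆_0(e⋆_0)^{-1}(y) and ∇'_x y = 𝛁^{(0,r)}_x y − 𝛁^{(0,r)}_{x∗'y} e — equals (∇, ∗, E). (ii) Conversely, let (𝛁, ⋆, e) be an almost Saito structure with parameter r ∈ ℂ and unit E, and let (∇, ∗, E) be its dual Saito structure, defined on the subset where e⋆ is invertible by x∗y = x⋆(e⋆)^{-1}(y) and ∇_x y = 𝛁_x y − 𝛁_{x∗y} e. Then the dual almost Saito structure of (∇, ∗, E) with parameter r equals (𝛁, ⋆, e). -/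
universe u v

variable {A : Type u} {X : Type v} [CommRing A] [Algebra ℂ A]
  [AddCommGroup X] [Module A X]

/-- Theorem 3.7 of the paper (almost duality for Saito structures):
(i) the dual Saito structure of the dual almost Saito structure (with any
parameter `r`) of a Saito structure is the original Saito structure;
(ii) the dual almost Saito structure with parameter `r` of the dual Saito
structure of an almost Saito structure with parameter `r` is the original
almost Saito structure. -/
theorem almost_duality
    (V : VectorFields A X) :
    (∀ conn mul : X → X → X, ∀ e E : X, ∀ r : ℂ,
      IsSaitoStructure V conn mul e E →
      Function.Bijective (fun v : X => mul E v) →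
      ∀ star conn2 mulBack connBack : X → X → X,
        (∀ x y : X, star x y = Function.invFun (fun v : X => mul E v) (mul x y)) →
        (∀ x y : X, conn2 x y
          = conn x y + algebraMap ℂ A r • star x y - conn (star x y) E) →
        (∀ x y : X, mulBack x y
          = star x (Function.invFun (fun v : X => star e v) y)) →
        (∀ x y : X, connBack x y = conn2 x y - conn2 (mulBack x y) e) →
        mulBack = mul ∧ connBack = conn) ∧
    (∀ conn mul : X → X → X, ∀ e E : X, ∀ r : ℂ,
      IsAlmostSaitoStructure V conn mul e E r →
      Function.Bijective (fun v : X => mul e v) →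
      ∀ mul2 conn2 starBack connBack : X → X → X,
        (∀ x y : X, mul2 x y = mul x (Function.invFun (fun v : X => mul e v) y)) →
        (∀ x y : X, conn2 x y = conn x y - conn (mul2 x y) e) →
        (∀ x y : X, starBack x y
          = Function.invFun (fun v : X => mul2 E v) (mul2 x y)) →
        (∀ x y : X, connBack x y
          = conn2 x y + algebraMap ℂ A r • starBack x y - conn2 (starBack x y) E) →
        starBack = mul ∧ connBack = conn) := by
  constructor
  · -- Part (i)
    intro conn mul e E r hS hb star conn2 mulBack connBack hstar hconn2 hmulBack hconnBack
    have hLI : ∀ y, Function.invFun (fun v : X => mul E v) (mul E y) = y := fun y =>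
      Function.leftInverse_invFun hb.injective y
    have hRI : ∀ y, mul E (Function.invFun (fun v : X => mul E v) y) = y := fun y =>
      Function.rightInverse_invFun hb.surjective y
    have hse : ∀ y, star e y = Function.invFun (fun v : X => mul E v) y := by
      intro y; rw [hstar, hS.mul_unital.unit]
    have hsesurj : Function.Surjective (fun v : X => star e v) := by
      intro y; exact ⟨mul E y, by simp [hse, hLI]⟩
    have hinv : ∀ y, Function.invFun (fun v : X => star e v) y = mul E y := by
      intro y
      have h1 : star e (Function.invFun (fun v : X => star e v) y) = y :=
        Function.rightInverse_invFun hsesurj y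
      rw [hse] at h1
      have h2 := congrArg (fun v : X => mul E v) h1
      simpa [hRI] using h2
    have hswap : ∀ x y : X, mul x (mul E y) = mul E (mul x y) := by
      intro x y
      rw [← hS.mul_unital.assoc, hS.mul_unital.comm x E, hS.mul_unital.assoc]
    have hmb : ∀ x y : X, mulBack x y = mul x y := by
      intro x y
      rw [hmulBack, hinv, hstar, hswap, hLI]
    have hstarmul : ∀ x y : X, star (mul x y) e = star x y := by
      intro x y
      rw [hstar, hstar]
      congr 1
      rw [hS.mul_unital.comm, hS.mul_unital.unit]
    refine ⟨funext fun x => funext fun y => hmb x y, funext fun x => funext fun y => ?_⟩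
    rw [hconnBack, hconn2, hconn2, hmb, hstarmul, hS.SS3]
    abel
  · -- Part (ii)
    intro conn mul e E r hS hb mul2 conn2 starBack connBack hmul2 hconn2 hstarBack hconnBack
    have hLI : ∀ y, Function.invFun (fun v : X => mul e v) (mul e y) = y := fun y =>
      Function.leftInverse_invFun hb.injective y
    have hRI : ∀ y, mul e (Function.invFun (fun v : X => mul e v) y) = y := fun y =>
      Function.rightInverse_invFun hb.surjective y
    have hm2E : ∀ y, mul2 E y = Function.invFun (fun v : X => mul e v) y := by
      intro y; rw [hmul2, hS.mul_unital.unit]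
    have hm2surj : Function.Surjective (fun v : X => mul2 E v) := by
      intro y; exact ⟨mul e y, by simp [hm2E, hLI]⟩
    have hinv : ∀ y, Function.invFun (fun v : X => mul2 E v) y = mul e y := by
      intro y
      have h1 : mul2 E (Function.invFun (fun v : X => mul2 E v) y) = y :=
        Function.rightInverse_invFun hm2surj y
      rw [hm2E] at h1
      have h2 := congrArg (fun v : X => mul e v) h1
      simpa [hRI] using h2
    have hsb : ∀ x y : X, starBack x y = mul x y := by
      intro x y
      rw [hstarBack, hinv, hmul2, ← hS.mul_unital.assoc, hS.mul_unital.comm e x,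
        hS.mul_unital.assoc, hRI]
    have hkey : ∀ y : X, mul y (Function.invFun (fun v : X => mul e v) E)
        = Function.invFun (fun v : X => mul e v) y := by
      intro y
      apply hb.injective
      show mul e _ = mul e _
      rw [hRI, ← hS.mul_unital.assoc, hS.mul_unital.comm e y, hS.mul_unital.assoc, hRI,
        hS.mul_unital.comm, hS.mul_unital.unit]
    have hm2mul : ∀ x y : X, mul2 (mul x y) E = mul2 x y := by
      intro x y
      rw [hmul2, hmul2, hS.mul_unital.assoc, hkey]
    refine ⟨funext fun x => funext fun y => hsb x y, funext fun x => funext fun y => ?_⟩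
    rw [hconnBack, hconn2, hconn2, hsb, hm2mul, hS.ASS3]
    abel
end

section
/- Let (M, ∇, 𝛁, ∗, ⋆, e, E) be a bi-flat F-manifold. Then (∇, ∗, E) is a Saito structure on M, and the second connection is determined by 𝛁_x y = ∇_x y − ∇_{x⋆y} E for all vector fields x, y; in other words, (𝛁, ⋆, e) is the dual almost Saito structure of (∇, ∗, E) with parameter r = 0. -/
universe u v

variable {A : Type u} {X : Type v} [CommRing A] [Algebra ℂ A]
  [AddCommGroup X] [Module A X]

/-- A bi-flat `F`-manifold (Arsie–Lorenzoni): two torsion-free flat connections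
`conn1, conn2` and two associative commutative multiplications `mul1, mul2`
with units `e, E` respectively, satisfying (SS1), (SS2), (SS3), (ASS1),
(ASS3) with `r = 0`, the invertibility of `U x = E ∗ x` with
`E ∗ (x ⋆ y) = x ∗ y`, and almost hydrodynamic equivalence of the two
connections. -/
structure IsBiFlat (V : VectorFields A X) (conn1 conn2 mul1 mul2 : X → X → X)
    (e E : X) : Prop where
  conn1_flat : IsTFFlatConnection V conn1
  conn2_flat : IsTFFlatConnection V conn2
  mul1_unital : IsUnitalMul (A := A) mul1 e
  mul2_unital : IsUnitalMul (A := A) mul2 E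
  SS1 : ∀ x y z : X,
    conn1 x (mul1 y z) - mul1 y (conn1 x z) - conn1 y (mul1 x z) + mul1 x (conn1 y z)
      = mul1 (V.bracket x y) z
  SS2 : ∀ x y : X,
    V.bracket E (mul1 x y) - mul1 (V.bracket E x) y - mul1 x (V.bracket E y) = mul1 x y
  SS3 : ∀ x : X, conn1 x e = 0
  ASS1 : ∀ x y z : X,
    conn2 x (mul2 y z) - mul2 y (conn2 x z) - conn2 y (mul2 x z) + mul2 x (conn2 y z)
      = mul2 (V.bracket x y) z
  ASS3 : ∀ x : X, conn2 x E = 0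
  U_bijective : Function.Bijective fun v : X => mul1 E v
  U_compat : ∀ x y : X, mul1 E (mul2 x y) = mul1 x y
  hydro : ∀ x y z : X,
    conn2 x (mul1 y z) - conn2 y (mul1 x z) = conn1 x (mul1 y z) - conn1 y (mul1 x z)

private lemma lc1 {G : Type*} [AddCommGroup G] {a b c d : G}
    (h : c = d) (k : a - b = c - d) : a = b := by
  rw [h, sub_self] at k
  exact sub_eq_zero.mp k

private lemma lc2 {G : Type*} [AddCommGroup G] {a b c d p q : G}
    (h1 : c = d) (h2 : p = q) (k : a - b = (c - d) + (p - q)) : a = b := by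
  rw [h1, h2, sub_self, sub_self, add_zero] at k
  exact sub_eq_zero.mp k

private lemma lc3 {G : Type*} [AddCommGroup G] {a b c d p q r s : G}
    (h1 : c = d) (h2 : p = q) (h3 : r = s)
    (k : a - b = (c - d) + (p - q) + (r - s)) : a = b := by
  rw [h1, h2, h3, sub_self, sub_self, sub_self, add_zero, add_zero] at k
  exact sub_eq_zero.mp k

/-- Lemma 4.2 of the paper: a bi-flat `F`-manifold gives a Saito structure
`(∇, ∗, E)`, and the second connection is `𝛁ₓ y = ∇ₓ y - ∇_{x ⋆ y} E`;
i.e. `(𝛁, ⋆, e)` is the dual almost Saito structure of `(∇, ∗, E)` with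
parameter `r = 0`. -/
theorem biflat_gives_saito
    (V : VectorFields A X) (conn1 conn2 mul1 mul2 : X → X → X) (e E : X)
    (h : IsBiFlat V conn1 conn2 mul1 mul2 e E) :
    IsSaitoStructure V conn1 mul1 e E ∧
    ∀ x y : X, conn2 x y = conn1 x y - conn1 (mul2 x y) E := by
  obtain ⟨c1f, c2f, m1u, m2u, ss1, ss2, ss3, _ass1, ass3, ubij, ucompat, hyd⟩ := h
  -- additive helpers
  have c1subl : ∀ a b w : X, conn1 (a - b) w = conn1 a w - conn1 b w := fun a b w =>
    (AddMonoidHom.mk' (fun u => conn1 u w) (fun p q => c1f.add_left p q w)).map_sub a b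
  have c1zl : ∀ w : X, conn1 0 w = 0 := fun w =>
    (AddMonoidHom.mk' (fun u => conn1 u w) (fun p q => c1f.add_left p q w)).map_zero
  have c1subr : ∀ x a b : X, conn1 x (a - b) = conn1 x a - conn1 x b := fun x a b =>
    (AddMonoidHom.mk' (fun u => conn1 x u) (fun p q => c1f.add_right x p q)).map_sub a b
  have m1addr : ∀ x a b : X, mul1 x (a + b) = mul1 x a + mul1 x b := by
    intro x a b
    rw [m1u.comm, m1u.add_left, m1u.comm a x, m1u.comm b x]
  have m1subl : ∀ a b w : X, mul1 (a - b) w = mul1 a w - mul1 b w := fun a b w =>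
    (AddMonoidHom.mk' (fun u => mul1 u w) (fun p q => m1u.add_left p q w)).map_sub a b
  have m1subr : ∀ x a b : X, mul1 x (a - b) = mul1 x a - mul1 x b := fun x a b =>
    (AddMonoidHom.mk' (fun u => mul1 x u) (fun p q => m1addr x p q)).map_sub a b
  have m2addr : ∀ x a b : X, mul2 x (a + b) = mul2 x a + mul2 x b := by
    intro x a b
    rw [m2u.comm, m2u.add_left, m2u.comm a x, m2u.comm b x]
  have m2subl : ∀ a b w : X, mul2 (a - b) w = mul2 a w - mul2 b w := fun a b w =>
    (AddMonoidHom.mk' (fun u => mul2 u w) (fun p q => m2u.add_left p q w)).map_sub a b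
  have m2subr : ∀ x a b : X, mul2 x (a - b) = mul2 x a - mul2 x b := fun x a b =>
    (AddMonoidHom.mk' (fun u => mul2 x u) (fun p q => m2addr x p q)).map_sub a b
  -- Step 1: the formula for the second connection
  have hD : ∀ y z : X, conn2 y z - conn1 y z
      = conn2 e (mul1 y z) - conn1 e (mul1 y z) := by
    intro y z
    have h1 := hyd e y z
    rw [m1u.unit z] at h1
    exact lc1 h1.symm (by abel)
  have formula : ∀ x y : X, conn2 x y = conn1 x y - conn1 (mul2 x y) E := by
    intro x y
    have h1 := hD x y
    have h2 := hD (mul2 x y) E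
    rw [m1u.comm (mul2 x y) E, ucompat x y, ass3 (mul2 x y)] at h2
    exact lc2 h1 h2.symm (by abel)
  -- symmetry of ∇(∗)
  have hSm : ∀ x y z : X,
      conn1 x (mul1 y z) - mul1 (conn1 x y) z - mul1 y (conn1 x z)
        = conn1 y (mul1 x z) - mul1 (conn1 y x) z - mul1 x (conn1 y z) := by
    intro x y z
    have hb := ss1 x y z
    rw [← c1f.torsion_free x y, m1subl] at hb
    exact lc1 hb (by abel)
  -- SS2 in terms of the connection
  have hStar : ∀ x y : X,
      conn1 E (mul1 x y)
        = mul1 (conn1 E x) y + mul1 x (conn1 E y) + mul1 x y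
          + conn1 (mul1 x y) E - mul1 (conn1 x E) y - mul1 x (conn1 y E) := by
    intro x y
    have hb := ss2 x y
    rw [← c1f.torsion_free E (mul1 x y), ← c1f.torsion_free E x,
        ← c1f.torsion_free E y, m1subl, m1subr] at hb
    exact lc1 hb (by abel)
  -- derivative of E ∗ y
  have hII : ∀ u y : X,
      conn1 u (mul1 E y)
        = mul1 E (conn1 u y) + mul1 u y + conn1 (mul1 u y) E
          - mul1 u (conn1 y E) := by
    intro u y
    exact lc2 (hSm u E y) (hStar u y) (by abel)
  -- derivative of the star product along E
  have hIII : ∀ x z : X,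
      conn1 E (mul2 x z)
        = mul2 (conn1 E x) z + mul2 x (conn1 E z) + conn1 (mul2 x z) E
          - mul2 (conn1 x E) z - mul2 x (conn1 z E) := by
    intro x z
    have ha := hII E (mul2 x z)
    rw [ucompat x z] at ha
    have hb := hStar x z
    have hstep : mul1 E (mul2 (conn1 E x) z + mul2 x (conn1 E z) + conn1 (mul2 x z) E
          - mul2 (conn1 x E) z - mul2 x (conn1 z E))
        = mul1 E (conn1 E (mul2 x z)) := by
      simp only [m1addr, m1subr, ucompat]
      exact lc2 ha hb.symm (by abel)
    exact (ubij.injective hstep).symm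
  have hIII' : ∀ x z : X,
      conn1 (conn1 E (mul2 x z)) E
        = conn1 (mul2 (conn1 E x) z) E + conn1 (mul2 x (conn1 E z)) E
          + conn1 (conn1 (mul2 x z) E) E
          - conn1 (mul2 (conn1 x E) z) E - conn1 (mul2 x (conn1 z E)) E := by
    intro x z
    rw [hIII x z]
    simp only [c1f.add_left, c1subl]
  -- flatness of the first connection at (x, E, z)
  have hflat1 : ∀ x z : X,
      conn1 x (conn1 E z) - conn1 E (conn1 x z)
        = conn1 (conn1 x E) z - conn1 (conn1 E x) z := by
    intro x z
    have h1 := c1f.flat x E z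
    rw [← c1f.torsion_free x E, c1subl] at h1
    exact h1
  -- flatness of the second connection at (x, E, z), rewritten via the formula
  have hflat2 : ∀ x z : X,
      conn1 x (conn1 E z) - conn1 x (conn1 z E)
        - conn1 (mul2 x (conn1 E z)) E + conn1 (mul2 x (conn1 z E)) E
        - (conn1 E (conn1 x z) - conn1 E (conn1 (mul2 x z) E)
            - conn1 (conn1 x z) E + conn1 (conn1 (mul2 x z) E) E)
        = conn1 (conn1 x E) z - conn1 (conn1 E x) z
          - conn1 (mul2 (conn1 x E) z) E + conn1 (mul2 (conn1 E x) z) E := by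
    intro x z
    have h1 := c2f.flat x E z
    simp only [formula, m2u.unit] at h1
    rw [← c1f.torsion_free x E] at h1
    simp only [c1subl, c1subr, m2subl, m2subr] at h1
    exact lc1 h1 (by abel)
  -- the key identity: (∇ₓ C)(z) = (∇_E C)(x ⋆ z)
  have hMAIN : ∀ x z : X,
      conn1 x (conn1 z E) - conn1 (conn1 x z) E
        = conn1 E (conn1 (mul2 x z) E) - conn1 (conn1 E (mul2 x z)) E := by
    intro x z
    exact lc3 (hflat2 x z).symm (hflat1 x z) (hIII' x z) (by abel)
  -- Ce = e
  have hCe : conn1 e E = e := by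
    have hb := ss2 e e
    rw [m1u.unit e, m1u.comm (V.bracket E e) e, m1u.unit (V.bracket E e)] at hb
    have h2 : V.bracket E e = -e := lc1 hb.symm (by abel)
    have h4 : V.bracket e E = e := by
      rw [V.bracket_antisymm e E, h2, neg_neg]
    have h3 := c1f.torsion_free e E
    rw [ss3 E, h4, sub_zero] at h3
    exact h3
  have hKe : ∀ x : X, conn1 x (conn1 e E) - conn1 (conn1 x e) E = 0 := by
    intro x
    rw [hCe, ss3 x, c1zl E, sub_zero]
  have hUnitStar : ∀ w : X, mul2 (mul1 E w) e = w := by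
    intro w
    have hst : mul1 E (mul2 (mul1 E w) e) = mul1 E w := by
      rw [ucompat, m1u.comm, m1u.unit]
    exact ubij.injective hst
  have hKE0 : ∀ w : X, conn1 E (conn1 w E) - conn1 (conn1 E w) E = 0 := by
    intro w
    have h3 := hMAIN (mul1 E w) e
    rw [hUnitStar w] at h3
    rw [← h3]
    exact hKe (mul1 E w)
  refine ⟨⟨c1f, m1u, ss1, ss2, ss3, ?_⟩, formula⟩
  intro x y
  rw [hMAIN x y]
  exact hKE0 (mul2 x y)
end

section
/- Let (∇, ∗, E) be a Saito structure on M with unit e, fix λ ∈ ℂ, and on the open subset M_λ where U_λ(x) = (E − λe)∗x is invertible define x⋆_λ y = U_λ^{-1}(x∗y) and 𝛁^{(λ,0)}_x y = ∇_x y − ∇_{x⋆_λ y} E. Then (M_λ, ∇, 𝛁^{(λ,0)}, ∗, ⋆_λ, e, E − λe) is a bi-flat F-manifold; in particular ∇ and 𝛁^{(λ,0)} are almost hydrodynamically equivalent: 𝛁^{(λ,0)}_x(y∗z) − 𝛁^{(λ,0)}_y(x∗z) = ∇_x(y∗z) − ∇_y(x∗z) for all vector fields x, y, z on M_λ. -/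
universe u v

variable {A : Type u} {X : Type v} [CommRing A] [Algebra ℂ A]
  [AddCommGroup X] [Module A X]

/-- Lemma 4.3 of the paper: a Saito structure `(∇, ∗, E)` together with the
dual data `⋆_λ`, `𝛁^{(λ,0)}` (on the subset `M_λ` where
`U_λ x = (E - λe) ∗ x` is invertible) forms a bi-flat `F`-manifold; in
particular `∇` and `𝛁^{(λ,0)}` are almost hydrodynamically equivalent. -/
theorem saito_gives_biflat
    (V : VectorFields A X) (conn mul : X → X → X) (e E : X) (lam : ℂ)
    (h : IsSaitoStructure V conn mul e E)
    (hU : Function.Bijective fun v : X => mul (E - algebraMap ℂ A lam • e) v) :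
    ∀ star conn2 : X → X → X,
      (∀ x y : X, star x y
        = Function.invFun (fun v : X => mul (E - algebraMap ℂ A lam • e) v) (mul x y)) →
      (∀ x y : X, conn2 x y = conn x y - conn (star x y) E) →
      IsBiFlat V conn conn2 mul star e (E - algebraMap ℂ A lam • e) ∧
      ∀ x y z : X,
        conn2 x (mul y z) - conn2 y (mul x z) = conn x (mul y z) - conn y (mul x z) := by
  intro star conn2 hstar hconn2
  obtain ⟨C, M, SS1, SS2, SS3, SS4⟩ := h
  set lam' : A := algebraMap ℂ A lam with hlam
  set E' : X := E - lam' • e with hE'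
  -- basic multiplication lemmas
  have mul_addr : ∀ x y z : X, mul x (y + z) = mul x y + mul x z := by
    intro x y z; rw [M.comm, M.add_left, M.comm y x, M.comm z x]
  have mul_smulr : ∀ (f : A) (x y : X), mul x (f • y) = f • mul x y := by
    intro f x y; rw [M.comm, M.smul_left, M.comm y x]
  have mul_subl : ∀ x y z : X, mul (x - y) z = mul x z - mul y z := by
    intro x y z
    rw [sub_eq_add_neg, ← neg_one_smul A y, M.add_left, M.smul_left, neg_one_smul,
      ← sub_eq_add_neg]
  have mul_subr : ∀ x y z : X, mul x (y - z) = mul x y - mul x z := by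
    intro x y z; rw [M.comm, mul_subl, M.comm y x, M.comm z x]
  -- connection lemmas
  have act_alg : ∀ (x : X) (c : ℂ), V.act x (algebraMap ℂ A c) = 0 := V.act_algebraMap
  have conn_smulr : ∀ (x : X) (c : ℂ) (y : X),
      conn x (algebraMap ℂ A c • y) = algebraMap ℂ A c • conn x y := by
    intro x c y; rw [C.leibniz, act_alg, zero_smul, zero_add]
  have conn_subl : ∀ x y z : X, conn (x - y) z = conn x z - conn y z := by
    intro x y z
    rw [sub_eq_add_neg, ← neg_one_smul A y, C.add_left, C.smul_left, neg_one_smul,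
      ← sub_eq_add_neg]
  have conn_subr : ∀ x y z : X, conn x (y - z) = conn x y - conn x z := by
    intro x y z
    have : (-1 : A) = algebraMap ℂ A (-1) := by simp
    rw [sub_eq_add_neg, ← neg_one_smul A z, C.add_right, this, conn_smulr]
    simp [sub_eq_add_neg]
  -- L := conn · E is flat and A-linear
  have connL : ∀ x w : X, conn x (conn w E) = conn (conn x w) E := by
    intro x w; exact sub_eq_zero.mp (SS4 x w)
  have L_add : ∀ a b : X, conn (a + b) E = conn a E + conn b E := fun a b => C.add_left a b E
  have L_sub : ∀ a b : X, conn (a - b) E = conn a E - conn b E := fun a b => conn_subl a b E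
  have L_smul : ∀ (f : A) (a : X), conn (f • a) E = f • conn a E := fun f a => C.smul_left f a E
  -- the inverse g of U := mul E' ·
  set g : X → X := Function.invFun (fun v : X => mul E' v) with hgdef
  have hg1 : ∀ v : X, mul E' (g v) = v := fun v => Function.rightInverse_invFun hU.2 v
  have hg2 : ∀ v : X, g (mul E' v) = v := fun v => Function.leftInverse_invFun hU.1 v
  have Uinj : ∀ a b : X, mul E' a = mul E' b → a = b := fun a b hab => hU.1 hab
  have hstar' : ∀ x y : X, star x y = g (mul x y) := hstar
  have U_star : ∀ x y : X, mul E' (star x y) = mul x y := by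
    intro x y; rw [hstar' x y]; exact hg1 _
  -- star lemmas
  have star_comm : ∀ x y : X, star x y = star y x := by
    intro x y; rw [hstar', hstar', M.comm]
  have star_addl : ∀ x y z : X, star (x + y) z = star x z + star y z := by
    intro x y z
    apply Uinj; rw [mul_addr, U_star, U_star, U_star, M.add_left]
  have star_smull : ∀ (f : A) (x y : X), star (f • x) y = f • star x y := by
    intro f x y
    apply Uinj; rw [mul_smulr, U_star, U_star, M.smul_left]
  have star_addr : ∀ x y z : X, star x (y + z) = star x y + star x z := by
    intro x y z; rw [star_comm, star_addl, star_comm y x, star_comm z x]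
  have star_smulr : ∀ (f : A) (x y : X), star x (f • y) = f • star x y := by
    intro f x y; rw [star_comm, star_smull, star_comm y x]
  have star_subl : ∀ x y z : X, star (x - y) z = star x z - star y z := by
    intro x y z
    rw [sub_eq_add_neg, ← neg_one_smul A y, star_addl, star_smull, neg_one_smul,
      ← sub_eq_add_neg]
  have star_subr : ∀ x y z : X, star x (y - z) = star x y - star x z := by
    intro x y z; rw [star_comm, star_subl, star_comm y x, star_comm z x]
  have star_unit : ∀ x : X, star E' x = x := by
    intro x; apply Uinj; rw [U_star]
  have mulE'_assoc : ∀ a b : X, mul E' (mul a b) = mul a (mul E' b) := by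
    intro a b; rw [← M.assoc, M.comm E' a, M.assoc]
  have mul_star_swap : ∀ x y z : X, mul x (star y z) = mul y (star x z) := by
    intro x y z
    apply Uinj
    rw [mulE'_assoc, U_star, mulE'_assoc, U_star, ← M.assoc, M.comm x y, M.assoc]
  have star_assoc : ∀ x y z : X, star (star x y) z = star x (star y z) := by
    intro x y z
    apply Uinj
    rw [U_star, U_star, M.comm (star x y) z, mul_star_swap z x y, star_comm z y]
  have star_left_comm : ∀ x y z : X, star x (star y z) = star y (star x z) := by
    intro x y z
    rw [← star_assoc, star_comm x y, star_assoc]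
  -- bracket lemmas
  have hbr : ∀ a b : X, V.bracket a b = conn a b - conn b a :=
    fun a b => (C.torsion_free a b).symm
  -- conn e E = ?: the key identity (★)
  have starE : ∀ x z : X, conn (mul x z) E
      = conn x (mul E z) - mul E (conn x z) + mul x (conn z E) - mul x z := by
    intro x z
    have hi := SS2 x z
    have hii := SS1 x E z
    rw [hbr E (mul x z), hbr E x, hbr E z, mul_subl, mul_subr] at hi
    rw [hbr x E, mul_subl] at hii
    linear_combination (norm := abel) - hi - hii
  -- the version with E' (★λ)
  have starKey : ∀ x z : X, mul E' (conn x z)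
      = conn x (mul E' z) + mul x (conn z E) - mul x z - conn (mul x z) E := by
    intro x z
    have h1 : mul E' z = mul E z - lam' • z := by
      rw [hE', M.comm, mul_subr, mul_smulr, M.comm z E, M.comm z e, M.unit]
    have h2 : mul E' (conn x z) = mul E (conn x z) - lam' • conn x z := by
      rw [hE', M.comm, mul_subr, mul_smulr, M.comm _ E, M.comm _ e, M.unit]
    have h3 : conn x (mul E' z) = conn x (mul E z) - lam' • conn x z := by
      rw [h1, conn_subr, hlam, conn_smulr]
    have h4 := starE x z
    rw [h2, h3]
    linear_combination (norm := abel) h4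
  -- U of conn applied to star
  have Uconn : ∀ x w : X, mul E' (conn x w)
      = conn x (mul E' w) + mul x (conn w E) - mul x w - conn (mul x w) E :=
    starKey
  -- key identity (†): ASS1-type identity for (conn, star)
  have key2 : ∀ x y z : X,
      conn x (star y z) - star y (conn x z) - conn y (star x z) + star x (conn y z)
        - star x (conn (star y z) E) + star y (conn (star x z) E)
        = star (V.bracket x y) z := by
    intro x y z
    apply Uinj
    simp only [mul_subr, mul_addr]
    rw [Uconn x (star y z), Uconn y (star x z)]
    simp only [U_star]
    have hswap : mul x (star y z) = mul y (star x z) := mul_star_swap x y z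
    have hswapL : conn (mul x (star y z)) E = conn (mul y (star x z)) E :=
      congrArg (fun w => conn w E) hswap
    linear_combination (norm := abel) SS1 x y z - hswap - hswapL
  -- conn2 connection lemmas
  have conn2_addl : ∀ x y z : X, conn2 (x + y) z = conn2 x z + conn2 y z := by
    intro x y z
    rw [hconn2, hconn2, hconn2, C.add_left, star_addl, L_add]; abel
  have conn2_smull : ∀ (f : A) (x y : X), conn2 (f • x) y = f • conn2 x y := by
    intro f x y
    rw [hconn2, hconn2, C.smul_left, star_smull, L_smul, smul_sub]
  have conn2_addr : ∀ x y z : X, conn2 x (y + z) = conn2 x y + conn2 x z := by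
    intro x y z
    rw [hconn2, hconn2, hconn2, C.add_right, star_addr, L_add]; abel
  have conn2_leibniz : ∀ (x : X) (f : A) (y : X),
      conn2 x (f • y) = V.act x f • y + f • conn2 x y := by
    intro x f y
    rw [hconn2, hconn2, C.leibniz, star_smulr, L_smul, smul_sub]; abel
  have conn2_torsion : ∀ x y : X, conn2 x y - conn2 y x = V.bracket x y := by
    intro x y
    rw [hconn2, hconn2, star_comm y x, ← C.torsion_free]; abel
  have conn2_flat : ∀ x y z : X,
      conn2 x (conn2 y z) - conn2 y (conn2 x z) = conn2 (V.bracket x y) z := by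
    intro x y z
    rw [hconn2 x (conn2 y z), hconn2 y (conn2 x z), hconn2 (V.bracket x y) z,
      hconn2 y z, hconn2 x z]
    rw [conn_subr, conn_subr, star_subr, star_subr, L_sub, L_sub,
      connL x (star y z), connL y (star x z)]
    have hL := congrArg (fun w => conn w E) (key2 x y z)
    simp only [L_add, L_sub] at hL
    linear_combination (norm := abel) C.flat x y z - hL
  -- ASS1 for (conn2, star)
  have ass1 : ∀ x y z : X,
      conn2 x (star y z) - star y (conn2 x z) - conn2 y (star x z) + star x (conn2 y z)
        = star (V.bracket x y) z := by
    intro x y z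
    rw [hconn2 x (star y z), hconn2 y (star x z), hconn2 x z, hconn2 y z,
      star_subr, star_subr]
    have hcc := congrArg (fun w => conn w E) (star_left_comm x y z)
    linear_combination (norm := abel) key2 x y z - hcc
  -- ASS3
  have ass3 : ∀ x : X, conn2 x E' = 0 := by
    intro x
    have h1 : star x E' = x := by rw [star_comm]; exact star_unit x
    rw [hconn2, h1, hE', conn_subr, hlam, conn_smulr, SS3, smul_zero, sub_zero, sub_self]
  -- bracket linearity lemmas
  have br_smul_alg : ∀ (c : ℂ) (a w : X),
      V.bracket (algebraMap ℂ A c • a) w = algebraMap ℂ A c • V.bracket a w := by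
    intro c a w
    rw [V.bracket_antisymm, V.bracket_smul_right, act_alg, zero_smul, zero_add, ← smul_neg,
      ← V.bracket_antisymm]
  have br_negl : ∀ a w : X, V.bracket (-a) w = - V.bracket a w := by
    intro a w
    have h1 : (-a : X) = algebraMap ℂ A (-1 : ℂ) • a := by simp
    rw [h1, br_smul_alg]; simp
  have br_subl : ∀ a b w : X, V.bracket (a - b) w = V.bracket a w - V.bracket b w := by
    intro a b w
    rw [sub_eq_add_neg, V.bracket_add_left, br_negl, ← sub_eq_add_neg]
  -- the e-part of SS2 vanishes
  have hbe : ∀ w : X, V.bracket e w = conn e w := by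
    intro w; rw [hbr, SS3, sub_zero]
  have he : ∀ x y : X,
      V.bracket e (mul x y) - mul (V.bracket e x) y - mul x (V.bracket e y) = 0 := by
    intro x y
    have h1 := SS1 e x y
    simp only [M.unit] at h1
    simp only [hbe] at h1 ⊢
    linear_combination (norm := abel) h1
  -- SS2 for E'
  have ss2' : ∀ x y : X,
      V.bracket E' (mul x y) - mul (V.bracket E' x) y - mul x (V.bracket E' y)
        = mul x y := by
    intro x y
    have h2 := SS2 x y
    have h3 := he x y
    have hc := congrArg (fun w => lam' • w) h3
    simp only [smul_sub, smul_zero] at hc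
    rw [hlam] at hc
    rw [hE', hlam]
    simp only [br_subl, br_smul_alg, mul_subl, mul_subr, M.smul_left, mul_smulr]
    linear_combination (norm := abel) h2 - hc
  -- hydrodynamic equivalence
  have hydro : ∀ x y z : X,
      conn2 x (mul y z) - conn2 y (mul x z) = conn x (mul y z) - conn y (mul x z) := by
    intro x y z
    rw [hconn2, hconn2]
    have h1 : star x (mul y z) = star y (mul x z) := by
      apply Uinj; rw [U_star, U_star, ← M.assoc, M.comm x y, M.assoc]
    have h2 := congrArg (fun w => conn w E) h1
    linear_combination (norm := abel) - h2
  refine ⟨⟨C, ⟨conn2_addl, conn2_smull, conn2_addr, conn2_leibniz, conn2_torsion, conn2_flat⟩,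
    M, ⟨star_addl, star_smull, star_comm, star_assoc, star_unit⟩,
    SS1, ss2', SS3, ass1, ass3, hU, U_star, hydro⟩, hydro⟩
end
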